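/- Let k ≥ 2, let G be a graph whose vertex set is partitioned into V_1, …, V_k with each V_i an independent set and every edge joining two distinct parts, let L ≥ 1, encode : V(G) → {0,1}^L injective, and σ_i : [k]∖{i} → [k−1] a bijection for each i ∈ [k], with associated set cover instance J(G). If v_1 ∈ V_1, …, v_k ∈ V_k are pairwise adjacent in G (i.e., they form a k-clique), then the set X = {{v_i, v_j} : 1 ≤ i < j ≤ k} of its C(k,2) edges covers the universe of J(G). -/
import Mathlib


/-- The adjacency relation of the set cover instance `J(G)` associated with a graph `G`
whose vertices are partitioned into `V_1, …, V_k` via `part`: the left side is `E(G)`,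
the universe is `[k] × ([k−1]^{0,1}) × [L]`, and an edge `{v, w}` with `v ∈ V_i`,
`w ∈ V_j` (`i ≠ j`) is adjacent to `(i', f, ℓ)` iff (`i' = i` and
`f (encode v ℓ) = σ_i j`) or (`i' = j` and `f (encode w ℓ) = σ_j i`). -/
def edgeAdj {V : Type} {k L : ℕ} (part : V → Fin k)
    (encode : V → Fin L → Bool)
    (σ : (i : Fin k) → {j : Fin k // j ≠ i} → Fin (k - 1))
    (e : Sym2 V) (u : Fin k × (Bool → Fin (k - 1)) × Fin L) : Prop :=
  ∃ v w : V, e = s(v, w) ∧ part v = u.1 ∧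
    ∃ hw : part w ≠ u.1, u.2.1 (encode v u.2.2) = σ u.1 ⟨part w, hw⟩

/-- Let `k ≥ 2`, `G` a graph whose vertex set is partitioned into
`V_1, …, V_k` with each `V_i` independent and every edge joining two distinct parts,
`L ≥ 1`, `encode : V(G) → {0,1}^L` injective, and `σ_i : [k]∖{i} → [k−1]` a bijection
for each `i`, with associated set cover instance `J(G)`.  If `v_1 ∈ V_1, …, v_k ∈ V_k`
form a `k`-clique, then the set `X = {{v_i, v_j} : i ≠ j}` of its edges covers the
universe of `J(G)`: every universe element is adjacent to some edge `{v_i, v_j}`. -/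
theorem clique_covers
    (k L : ℕ) (hk : 2 ≤ k) (hL : 1 ≤ L)
    (V : Type) (G : SimpleGraph V)
    (part : V → Fin k)
    (hpart : ∀ v w : V, G.Adj v w → part v ≠ part w)
    (encode : V → Fin L → Bool) (henc : Function.Injective encode)
    (σ : (i : Fin k) → {j : Fin k // j ≠ i} → Fin (k - 1))
    (hσ : ∀ i, Function.Bijective (σ i))
    (v : Fin k → V) (hv : ∀ i, part (v i) = i)
    (hclique : ∀ i j, i ≠ j → G.Adj (v i) (v j)) :
    ∀ u : Fin k × (Bool → Fin (k - 1)) × Fin L,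
      ∃ i j : Fin k, i ≠ j ∧ edgeAdj part encode σ (s(v i, v j)) u := by
  rintro ⟨i, f, ℓ⟩
  obtain ⟨⟨j, hj⟩, hσj⟩ := (hσ i).2 (f (encode (v i) ℓ))
  refine ⟨i, j, fun h => hj h.symm, v i, v j, rfl, hv i, ?_⟩
  refine ⟨by rw [hv j]; exact hj, ?_⟩
  simpa [hv j] using hσj.symm
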